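/- Let k ≥ 2 and q ≥ 1 be integers, and define b_k(n) = 1 − k if k divides n and b_k(n) = 1 otherwise. Define f(d) = 1 if d = k^{qn} for some integer n ≥ 0 and f(d) = 0 otherwise; define g(d) = b_k(n) if d = n^q for some positive integer n and g(d) = 0 otherwise; and let h(n) = ∑_{d | n} f(d) g(n/d). Then for every real number x ≥ 2, ∑_{n ≤ x} h(n) = (k−1) ∑_{0 ≤ d ≤ (1/q) log_k x} {x^{1/q}/k^d} + O(1), where the implied constant may depend on k and q. -/

import Mathlib

open scoped Classical

/-- `b_k(n) = 1 - k` if `k ∣ n`, else `1`. -/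
noncomputable def bAux (k n : ℕ) : ℤ := if k ∣ n then 1 - (k : ℤ) else 1

/-- `f(d) = 1` if `d = k^(q n)` for some `n ≥ 0`, else `0`. -/
noncomputable def fAux (k q d : ℕ) : ℤ := if ∃ n : ℕ, d = k ^ (q * n) then 1 else 0

/-- `g(d) = b_k(n)` if `d = n^q` for a positive integer `n`, else `0`. -/
noncomputable def gAux (k q d : ℕ) : ℤ :=
  if ∃ n : ℕ, 0 < n ∧ d = n ^ q ∧ k ∣ n then 1 - (k : ℤ)
  else if ∃ n : ℕ, 0 < n ∧ d = n ^ q then 1 else 0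

/-- `h(n) = ∑_{d ∣ n} f(d) g(n/d)`. -/
noncomputable def hAux (k q n : ℕ) : ℤ :=
  ∑ d ∈ n.divisors, fAux k q d * gAux k q (n / d)

/-- Divisor-sum swap: ∑_{n≤N} ∑_{d∣n} F d (n/d) = ∑_{a≤N} ∑_{b≤N/a} F a b. -/
lemma swap_lemma (N : ℕ) (F : ℕ → ℕ → ℤ) :
    ∑ n ∈ Finset.Icc 1 N, ∑ d ∈ n.divisors, F d (n / d)
      = ∑ a ∈ Finset.Icc 1 N, ∑ b ∈ Finset.Icc 1 (N / a), F a b := by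
  have h1 : ∀ n ∈ Finset.Icc 1 N,
      ∑ d ∈ n.divisors, F d (n / d)
        = ∑ a ∈ Finset.Icc 1 N, if a ∣ n then F a (n / a) else 0 := by
    intro n hn
    rw [Finset.mem_Icc] at hn
    rw [← Finset.sum_filter]
    apply Finset.sum_congr _ (fun _ _ => rfl)
    ext d
    simp only [Nat.mem_divisors, Finset.mem_filter, Finset.mem_Icc]
    constructor
    · rintro ⟨hd, hn0⟩
      refine ⟨⟨Nat.one_le_iff_ne_zero.2 ?_, le_trans (Nat.le_of_dvd (by omega) hd) hn.2⟩, hd⟩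
      rintro rfl; exact hn0 (Nat.eq_zero_of_zero_dvd hd)
    · rintro ⟨_, hd⟩; exact ⟨hd, by omega⟩
  rw [Finset.sum_congr rfl h1, Finset.sum_comm]
  apply Finset.sum_congr rfl
  intro a ha
  rw [Finset.mem_Icc] at ha
  have ha0 : 0 < a := ha.1
  rw [← Finset.sum_filter]
  refine Finset.sum_nbij' (fun n => n / a) (fun b => a * b) ?_ ?_ ?_ ?_ ?_
  · intro n hn
    simp only [Finset.mem_filter, Finset.mem_Icc] at hn ⊢
    obtain ⟨⟨h1n, h2n⟩, hdvd⟩ := hn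
    exact ⟨Nat.one_le_div_iff ha0 |>.2 (Nat.le_of_dvd (by omega) hdvd),
      Nat.div_le_div_right h2n⟩
  · intro b hb
    simp only [Finset.mem_filter, Finset.mem_Icc] at hb ⊢
    refine ⟨⟨by nlinarith [hb.1], (Nat.le_div_iff_mul_le ha0).1 hb.2 |>.trans_eq' (by ring_nf)⟩, ⟨b, rfl⟩⟩
  · intro n hn
    simp only [Finset.mem_filter, Finset.mem_Icc] at hn
    exact Nat.mul_div_cancel' hn.2
  · intro b hb
    exact Nat.mul_div_cancel_left b ha0
  · intro n hn; rfl

lemma gAux_pow (k q : ℕ) (hq : 1 ≤ q) (j : ℕ) (hj : 0 < j) :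
    gAux k q (j ^ q) = bAux k j := by
  have hinj : Function.Injective (fun a : ℕ => a ^ q) := Nat.pow_left_injective (by omega)
  unfold gAux bAux
  by_cases hdvd : k ∣ j
  · rw [if_pos ⟨j, hj, rfl, hdvd⟩, if_pos hdvd]
  · rw [if_neg, if_pos ⟨j, hj, rfl⟩, if_neg hdvd]
    rintro ⟨n, hn0, hn, hnd⟩
    exact hdvd (hinj hn.symm ▸ hnd)

lemma gAux_zero (k q d : ℕ) (h : ¬ ∃ n : ℕ, 0 < n ∧ d = n ^ q) : gAux k q d = 0 := by
  unfold gAux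
  rw [if_neg (fun ⟨n, hn0, hn, _⟩ => h ⟨n, hn0, hn⟩), if_neg h]

/-- ∑_{b ≤ P} g(b) = ∑_{j ≤ R} b_k(j)  where the q-th powers ≤ P are exactly j^q, j ≤ R. -/
lemma sum_gAux (k q : ℕ) (hq : 1 ≤ q) (P R : ℕ) (hR : ∀ j : ℕ, 0 < j → (j ^ q ≤ P ↔ j ≤ R)) :
    ∑ b ∈ Finset.Icc 1 P, gAux k q b = ∑ j ∈ Finset.Icc 1 R, bAux k j := by
  have hinj : Function.Injective (fun a : ℕ => a ^ q) := Nat.pow_left_injective (by omega)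
  rw [← Finset.sum_filter_of_ne (p := fun b => ∃ n : ℕ, 0 < n ∧ b = n ^ q)
    (by intro b _ hb; by_contra h; exact hb (gAux_zero k q b (by simpa using h)))]
  have himg : (Finset.Icc 1 P).filter (fun b => ∃ n : ℕ, 0 < n ∧ b = n ^ q)
      = (Finset.Icc 1 R).image (fun j => j ^ q) := by
    ext b
    simp only [Finset.mem_filter, Finset.mem_Icc, Finset.mem_image]
    constructor
    · rintro ⟨⟨hb1, hb2⟩, j, hj0, rfl⟩
      exact ⟨j, ⟨hj0, (hR j hj0).1 hb2⟩, rfl⟩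
    · rintro ⟨j, ⟨hj1, hj2⟩, rfl⟩
      exact ⟨⟨Nat.one_le_iff_ne_zero.2 (pow_ne_zero _ (by omega)), (hR j hj1).2 hj2⟩, j, hj1, rfl⟩
  rw [himg, Finset.sum_image (fun a _ b _ h => hinj h)]
  apply Finset.sum_congr rfl
  intro j hj
  rw [Finset.mem_Icc] at hj
  exact gAux_pow k q hq j hj.1

/-- ∑_{j ≤ P} b_k(j) = P - k * (P / k). -/
lemma sum_bAux (k P : ℕ) : ∑ j ∈ Finset.Icc 1 P, bAux k j = (P : ℤ) - k * ((P / k : ℕ) : ℤ) := by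
  have : ∀ j, bAux k j = 1 - (if k ∣ j then (k : ℤ) else 0) := by
    intro j; unfold bAux; split <;> simp
  simp only [this]
  rw [Finset.sum_sub_distrib, Finset.sum_ite, Finset.sum_const, Finset.sum_const,
    Finset.sum_const]
  have hcard : ((Finset.Icc 1 P).filter (fun x => k ∣ x)).card = P / k := by
    rw [← Nat.Ioc_filter_dvd_card_eq_div]
    congr 1
  rw [Nat.card_Icc, hcard]
  simp only [nsmul_eq_mul, smul_zero, add_zero, mul_one]
  push_cast [Nat.add_sub_cancel]
  ring

/-- Extracting the f-indicator: sum over a with f(a)=1 becomes sum over exponents d ≤ D. -/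
lemma sum_fAux (k q N D : ℕ) (hk : 2 ≤ k) (hq : 1 ≤ q)
    (hD : ∀ d : ℕ, k ^ (q * d) ≤ N ↔ d ≤ D) (T : ℕ → ℤ) :
    ∑ a ∈ Finset.Icc 1 N, fAux k q a * T a
      = ∑ d ∈ Finset.range (D + 1), T (k ^ (q * d)) := by
  have hinj : Function.Injective (fun d : ℕ => k ^ (q * d)) := by
    intro a b hab
    have h2 : 2 ≤ k ^ q := le_trans hk (Nat.le_self_pow (by omega) k)
    simp only [pow_mul] at hab
    exact Nat.pow_right_injective h2 hab
  have h1 : ∀ a, fAux k q a * T a = if (∃ n : ℕ, a = k ^ (q * n)) then T a else 0 := by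
    intro a; unfold fAux; split <;> simp
  simp only [h1]
  rw [← Finset.sum_filter]
  have himg : (Finset.Icc 1 N).filter (fun a => ∃ n : ℕ, a = k ^ (q * n))
      = (Finset.range (D + 1)).image (fun d => k ^ (q * d)) := by
    ext a
    simp only [Finset.mem_filter, Finset.mem_Icc, Finset.mem_image, Finset.mem_range,
      Nat.lt_succ_iff]
    constructor
    · rintro ⟨⟨_, haN⟩, d, rfl⟩
      exact ⟨d, (hD d).1 haN, rfl⟩
    · rintro ⟨d, hd, rfl⟩
      exact ⟨⟨Nat.one_le_iff_ne_zero.2 (pow_ne_zero _ (by omega)), (hD d).2 hd⟩, d, rfl⟩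
  rw [himg, Finset.sum_image (fun a _ b _ h => hinj h)]

/-- a^q ≤ x ↔ a ≤ x^(1/q), for nonneg reals. -/
lemma pow_le_iff_le_rpow {a x : ℝ} (q : ℕ) (hq : 1 ≤ q) (ha : 0 ≤ a) (hx : 0 ≤ x) :
    a ^ q ≤ x ↔ a ≤ x ^ (1 / (q : ℝ)) := by
  rw [one_div, ← Real.rpow_natCast a q, Real.le_rpow_inv_iff_of_pos ha hx (by positivity)]

lemma nat_floor_sub_fract (z : ℝ) (h : 0 ≤ z) : ((⌊z⌋₊ : ℝ)) = z - Int.fract z := by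
  rw [Int.self_sub_fract, ← Int.natCast_floor_eq_floor h]
  norm_num


/-- `∑_{n ≤ x} h(n) = (k-1) ∑_{0 ≤ d ≤ (1/q) log_k x} {x^{1/q}/k^d} + O_{k,q}(1)`. -/
theorem stmt_2 (k q : ℕ) (hk : 2 ≤ k) (hq : 1 ≤ q) :
    ∃ C : ℝ, ∀ x : ℝ, 2 ≤ x →
      |(∑ n ∈ Finset.Icc 1 ⌊x⌋₊, (hAux k q n : ℝ)) -
          ((k : ℝ) - 1) *
            ∑ d ∈ Finset.range (⌊Real.log x / ((q : ℝ) * Real.log k)⌋₊ + 1),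
              Int.fract (x ^ (1 / (q : ℝ)) / (k : ℝ) ^ d)| ≤ C := by
  refine ⟨k, ?_⟩
  intro x hx
  have hx0 : (0:ℝ) < x := by linarith
  have hk2 : (2:ℝ) ≤ (k:ℝ) := by exact_mod_cast hk
  have hk1 : (1:ℝ) < (k:ℝ) := by linarith
  set y : ℝ := x ^ (1 / (q : ℝ)) with hy
  have hy0 : 0 ≤ y := Real.rpow_nonneg hx0.le _
  set N := ⌊x⌋₊ with hN
  set D := ⌊Real.log x / ((q : ℝ) * Real.log k)⌋₊ with hD
  set a : ℕ → ℝ := fun d => Int.fract (y / (k : ℝ) ^ d) with ha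
  set M : ℕ → ℕ := fun d => ⌊y / (k : ℝ) ^ d⌋₊ with hM
  have hlogk : 0 < Real.log k := Real.log_pos hk1
  have hlogx : 0 ≤ Real.log x := Real.log_nonneg (by linarith)
  have hDiff : ∀ d : ℕ, k ^ (q * d) ≤ N ↔ d ≤ D := by
    intro d
    rw [hN, hD, Nat.le_floor_iff hx0.le,
      Nat.le_floor_iff (div_nonneg hlogx (by positivity)),
      le_div_iff₀ (by positivity), Nat.cast_pow,
      ← Real.log_le_log_iff (by positivity) hx0, Real.log_pow]
    push_cast
    constructor <;> intro h <;> nlinarith [hlogk]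
  have hMiff : ∀ d j : ℕ, 0 < j → (j ^ q ≤ N / k ^ (q * d) ↔ j ≤ M d) := by
    intro d j hj
    rw [Nat.le_div_iff_mul_le (pow_pos (by omega) _),
      show j ^ q * k ^ (q * d) = (j * k ^ d) ^ q by
        rw [mul_pow, ← pow_mul, Nat.mul_comm q d],
      hN, Nat.le_floor_iff hx0.le, Nat.cast_pow, Nat.cast_mul, Nat.cast_pow,
      pow_le_iff_le_rpow q hq (by positivity) hx0.le, ← hy, hM]
    simp only
    rw [Nat.le_floor_iff (by positivity), le_div_iff₀ (by positivity)]
  have key : ∑ n ∈ Finset.Icc 1 N, hAux k q n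
      = ∑ d ∈ Finset.range (D + 1), ((M d : ℤ) - k * ((M d / k : ℕ) : ℤ)) := by
    unfold hAux
    rw [swap_lemma N (fun d m => fAux k q d * gAux k q m)]
    have h2 : ∀ aa ∈ Finset.Icc 1 N,
        ∑ b ∈ Finset.Icc 1 (N / aa), fAux k q aa * gAux k q b
          = fAux k q aa * ∑ b ∈ Finset.Icc 1 (N / aa), gAux k q b := by
      intro aa _; rw [Finset.mul_sum]
    rw [Finset.sum_congr rfl h2, sum_fAux k q N D hk hq hDiff]
    apply Finset.sum_congr rfl
    intro d _
    rw [sum_gAux k q hq _ (M d) (hMiff d), sum_bAux]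
  have hMk : ∀ d, M d / k = M (d + 1) := by
    intro d
    rw [hM]
    simp only
    rw [← Nat.floor_div_natCast (y / (k : ℝ) ^ d) k]
    congr 1
    rw [pow_succ]
    field_simp
  have hMreal : ∀ d, ((M d : ℕ) : ℝ) = y / (k : ℝ) ^ d - a d := by
    intro d
    rw [hM, ha]
    exact nat_floor_sub_fract _ (by positivity)
  have keyR : (∑ n ∈ Finset.Icc 1 N, (hAux k q n : ℝ))
      = ∑ d ∈ Finset.range (D + 1), ((k : ℝ) * a (d + 1) - a d) := by
    have key2 : ∑ n ∈ Finset.Icc 1 N, hAux k q n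
        = ∑ d ∈ Finset.range (D + 1), ((M d : ℤ) - k * ((M (d + 1) : ℕ) : ℤ)) := by
      rw [key]
      exact Finset.sum_congr rfl fun d _ => by rw [hMk d]
    have hc := congrArg (fun z : ℤ => (z : ℝ)) key2
    push_cast at hc
    rw [hc]
    apply Finset.sum_congr rfl
    intro d _
    rw [hMreal d, hMreal (d + 1)]
    have hkpow : (k : ℝ) * (y / (k : ℝ) ^ (d + 1)) = y / (k : ℝ) ^ d := by
      rw [pow_succ]
      field_simp
    linear_combination -hkpow
  rw [keyR]
  have htel : ∑ d ∈ Finset.range (D + 1), ((k : ℝ) * a (d + 1) - a d)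
      - ((k : ℝ) - 1) * ∑ d ∈ Finset.range (D + 1), a d
      = (k : ℝ) * a (D + 1) - (k : ℝ) * a 0 := by
    rw [Finset.mul_sum, ← Finset.sum_sub_distrib]
    have h3 : ∀ d ∈ Finset.range (D + 1),
        ((k : ℝ) * a (d + 1) - a d) - ((k : ℝ) - 1) * a d
          = (k : ℝ) * a (d + 1) - (k : ℝ) * a d := by
      intro d _; ring
    rw [Finset.sum_congr rfl h3]
    exact Finset.sum_range_sub (fun d => (k : ℝ) * a d) (D + 1)
  rw [htel]
  have h4 : 0 ≤ a (D + 1) := Int.fract_nonneg _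
  have h5 : a (D + 1) < 1 := Int.fract_lt_one _
  have h6 : 0 ≤ a 0 := Int.fract_nonneg _
  have h7 : a 0 < 1 := Int.fract_lt_one _
  rw [← mul_sub, abs_mul, abs_of_nonneg (by linarith : (0:ℝ) ≤ (k:ℝ))]
  have h8 : |a (D + 1) - a 0| ≤ 1 := by rw [abs_le]; constructor <;> linarith
  nlinarith
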